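/- Let (G,P,δ) be a symmetric homogeneous Garside structure of finite type; if k ≥ 2 assume in addition that the structure is square free. Suppose X = P⁻¹ x₁^k P with x₁ an atom, P ∈ 𝒫 (the positive monoid), inf P = 0 and ℓ(P) = n ≥ 1. Let B₁·…·B_n be the left normal form of P and define simple elements A_i by A_i δ^{i-1} B_i = δ^i for i = 1,…,n. Then either δ^{-n}·A_n·…·A₁·x₁^k·B₁·…·B_n is the left normal form of X, or there exist an atom x₂ conjugate to x₁ and Q in the positive monoid such that X = Q⁻¹ x₂^k Q, ‖Q‖ < ‖P‖ and ℓ(Q) ≤ ℓ(P). -/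

import Mathlib

/-- A Garside structure `(G, P, Δ)` on a group `G`: `P` is the submonoid of positive
elements, `Δ` the Garside element.  The axioms (G1)-(G4) are stated below:
the prefix relation `a ≼ b ⟺ a⁻¹b ∈ P` is a lattice order (with gcd `wedge` and
lcm `vee`), the simple elements `[1,Δ]` generate `G`, conjugation by `Δ` preserves `P`,
and every nontrivial positive element has finite letter length. -/
structure GarsideStructure (G : Type*) [Group G] where
  P : Set G
  one_mem : (1 : G) ∈ P
  mul_mem : ∀ {a b : G}, a ∈ P → b ∈ P → a * b ∈ P
  inter_inv : ∀ a : G, a ∈ P → a⁻¹ ∈ P → a = 1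
  Δ : G
  Δ_mem : Δ ∈ P
  wedge : G → G → G
  vee : G → G → G
  wedge_le_left : ∀ a b : G, (wedge a b)⁻¹ * a ∈ P
  wedge_le_right : ∀ a b : G, (wedge a b)⁻¹ * b ∈ P
  le_wedge : ∀ a b c : G, c⁻¹ * a ∈ P → c⁻¹ * b ∈ P → c⁻¹ * wedge a b ∈ P
  le_vee_left : ∀ a b : G, a⁻¹ * vee a b ∈ P
  le_vee_right : ∀ a b : G, b⁻¹ * vee a b ∈ P
  vee_le : ∀ a b c : G, a⁻¹ * c ∈ P → b⁻¹ * c ∈ P → (vee a b)⁻¹ * c ∈ P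
  simples_generate : Subgroup.closure {a : G | a ∈ P ∧ a⁻¹ * Δ ∈ P} = ⊤
  conj_mem : ∀ a : G, a ∈ P → Δ⁻¹ * a * Δ ∈ P
  len_bdd : ∀ X : G, X ∈ P → X ≠ 1 →
    BddAbove {k : ℕ | ∃ w : List G, w.length = k ∧ (∀ a ∈ w, a ∈ P ∧ a ≠ 1) ∧ w.prod = X}

namespace GarsideStructure

variable {G : Type*} [Group G] (S : GarsideStructure G)

/-- The prefix order `a ≼ b`. -/
def le (a b : G) : Prop := a⁻¹ * b ∈ S.P

/-- Strict prefix order `a ≺ b`. -/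
def lt (a b : G) : Prop := S.le a b ∧ a ≠ b

/-- The suffix relation `a ≽ b ⟺ ab⁻¹ ∈ P`. -/
def ges (a b : G) : Prop := a * b⁻¹ ∈ S.P

/-- Simple elements: the interval `[1, Δ]`. -/
def IsSimple (a : G) : Prop := a ∈ S.P ∧ S.le a S.Δ

/-- Atoms: elements of `P \ {1}` that are not products of two elements of `P \ {1}`. -/
def IsAtom' (a : G) : Prop := a ∈ S.P ∧ a ≠ 1 ∧
  ¬ ∃ b c : G, b ∈ S.P ∧ b ≠ 1 ∧ c ∈ S.P ∧ c ≠ 1 ∧ a = b * c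

/-- The letter length `‖X‖` of a positive element. -/
noncomputable def norm (X : G) : ℕ :=
  sSup {k : ℕ | ∃ w : List G, w.length = k ∧ (∀ a ∈ w, a ∈ S.P ∧ a ≠ 1) ∧ w.prod = X}

/-- Finite type: finitely many simple elements. -/
def FiniteType : Prop := {a : G | S.IsSimple a}.Finite

/-- Homogeneous: the letter length is additive on `P`. -/
def Homogeneous : Prop := ∀ X ∈ S.P, ∀ Y ∈ S.P, S.norm (X * Y) = S.norm X + S.norm Y

/-- Symmetric: for simple `u, v`, `u ≼ v ⟺ v ≽ u`. -/
def IsSymmetric : Prop := ∀ u v : G, S.IsSimple u → S.IsSimple v → (S.le u v ↔ S.ges v u)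

/-- Square free: no simple element contains the square of an atom. -/
def SquareFree : Prop := ∀ a : G, S.IsSimple a →
  ¬ ∃ U x V : G, U ∈ S.P ∧ S.IsAtom' x ∧ V ∈ S.P ∧ a = U * x ^ 2 * V

/-- The right complement `∂A = A⁻¹Δ`. -/
def dl (A : G) : G := A⁻¹ * S.Δ

/-- `τ(X) = Δ⁻¹XΔ`. -/
def tau (X : G) : G := S.Δ⁻¹ * X * S.Δ

/-- The product `A·B` of simple elements is left weighted if `A = (AB) ∧ Δ`. -/
def LeftWeighted (A B : G) : Prop := A = S.wedge (A * B) S.Δ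

/-- The gcd for the suffix order `≽` (derived from the lcm for `≼`). -/
def rwedge (a b : G) : G := (S.vee a⁻¹ b⁻¹)⁻¹

/-- The product `A·B` of simple elements is right weighted if `B = (AB) ∧̃ Δ`. -/
def RightWeighted (A B : G) : Prop := B = S.rwedge (A * B) S.Δ

end GarsideStructure
/-- A Garside structure together with the (unique) left normal form of each element:
`X = Δ^(nfInf X) · (nfWord X)`, where the factors of `nfWord X` are simple elements
different from `1` and `Δ` and each consecutive pair is left weighted. -/
structure GarsideStructureNF (G : Type*) [Group G] extends GarsideStructure G where
  nfInf : G → ℤ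
  nfWord : G → List G
  nf_factors : ∀ X : G, ∀ a ∈ nfWord X,
    toGarsideStructure.IsSimple a ∧ a ≠ 1 ∧ a ≠ Δ
  nf_chain : ∀ X : G, List.Chain' toGarsideStructure.LeftWeighted (nfWord X)
  nf_prod : ∀ X : G, X = Δ ^ nfInf X * (nfWord X).prod
  nf_unique : ∀ (X : G) (p : ℤ) (w : List G),
    (∀ a ∈ w, toGarsideStructure.IsSimple a ∧ a ≠ 1 ∧ a ≠ Δ) →
    List.Chain' toGarsideStructure.LeftWeighted w →
    X = Δ ^ p * w.prod → p = nfInf X ∧ w = nfWord X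

namespace GarsideStructureNF

variable {G : Type*} [Group G] (S : GarsideStructureNF G)

/-- The infimum `inf X` of `X`: the power of `Δ` in the left normal form. -/
def inf (X : G) : ℤ := S.nfInf X

/-- The canonical length `ℓ(X)`. -/
def ell (X : G) : ℕ := (S.nfWord X).length

/-- The initial factor `ι(X) = τ^{-p}(A₁)`. -/
def iota (X : G) : G := S.Δ ^ S.nfInf X * (S.nfWord X).headD 1 * S.Δ ^ (-S.nfInf X)

/-- The final factor `φ(X) = A_r`. -/
def phi (X : G) : G := (S.nfWord X).getLastD 1

/-- The preferred prefix `𝔭(X) = ι(X) ∧ ∂(φ(X))`. -/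
def pp (X : G) : G := S.wedge (S.iota X) ((S.phi X)⁻¹ * S.Δ)

/-- Cyclic sliding `𝔰(X) = 𝔭(X)⁻¹ X 𝔭(X)` (and `𝔰(X) = X` when `ℓ(X) = 0`). -/
def sliding (X : G) : G := if S.ell X = 0 then X else (S.pp X)⁻¹ * X * S.pp X

/-- Cycling `c(X) = ι(X)⁻¹ X ι(X)` (and `c(X) = X` when `ℓ(X) = 0`). -/
def cycling (X : G) : G := if S.ell X = 0 then X else (S.iota X)⁻¹ * X * S.iota X

/-- Decycling `d(X) = φ(X) X φ(X)⁻¹` (and `d(X) = X` when `ℓ(X) = 0`). -/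
def decycling (X : G) : G := if S.ell X = 0 then X else S.phi X * X * (S.phi X)⁻¹

/-- The set of sliding circuits `SC(X) = {Y ∈ X^G | 𝔰^m(Y) = Y for some m > 0}`. -/
def SC (X : G) : Set G := {Y : G | IsConj X Y ∧ ∃ m : ℕ, 0 < m ∧ S.sliding^[m] Y = Y}

/-- `s` is an SC-minimal conjugator for `X`. -/
def SCMinConj (X s : G) : Prop :=
  s ∈ S.P ∧ s ≠ 1 ∧ s⁻¹ * X * s ∈ S.SC X ∧
  ∀ t : G, S.lt 1 t → S.lt t s → t⁻¹ * X * t ∉ S.SC X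

/-- The summit infimum `inf_s X = max {inf Y | Y ∈ X^G}`. -/
noncomputable def infS (X : G) : ℤ := sSup {p : ℤ | ∃ Y : G, IsConj X Y ∧ p = S.nfInf Y}

/-- The summit length `ℓ_s(X) = min {ℓ(Y) | Y ∈ X^G}`. -/
noncomputable def ellS (X : G) : ℕ := sInf {r : ℕ | ∃ Y : G, IsConj X Y ∧ r = S.ell Y}

end GarsideStructureNF

section Aux

namespace GarsideStructure

variable {G : Type*} [Group G] (S : GarsideStructure G)

lemma le_refl' (a : G) : S.le a a := by simpa [le] using S.one_mem

lemma le_trans' {a b c : G} (h1 : S.le a b) (h2 : S.le b c) : S.le a c := by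
  have := S.mul_mem h1 h2
  simpa [le, mul_assoc] using this

lemma le_antisymm' {a b : G} (h1 : S.le a b) (h2 : S.le b a) : a = b := by
  have h2' : (a⁻¹ * b)⁻¹ ∈ S.P := by simpa [le, mul_inv_rev] using h2
  have h := S.inter_inv _ h1 h2'
  have h' : a * (a⁻¹ * b) = a * 1 := by rw [h]
  simpa [mul_assoc] using h'.symm

lemma one_le {a : G} (ha : a ∈ S.P) : S.le 1 a := by simpa [le] using ha

lemma le_one {a : G} (ha : S.le a 1) : a⁻¹ ∈ S.P := by simpa [le] using ha

lemma pos_of_one_le {a : G} (ha : S.le 1 a) : a ∈ S.P := by simpa [le] using ha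

lemma le_mul {a b c : G} (h : S.le b c) : S.le (a * b) (a * c) := by
  simpa [le, mul_assoc] using h

lemma le_of_le_mul {a b c : G} (h : S.le (a * b) (a * c)) : S.le b c := by
  simpa [le, mul_assoc] using h

lemma le_mul_right {a b : G} (hb : b ∈ S.P) : S.le a (a * b) := by
  simpa [le, mul_assoc] using hb

lemma eq_one_of_le_one {a : G} (ha : a ∈ S.P) (h : S.le a 1) : a = 1 :=
  S.inter_inv a ha (S.le_one h)

lemma wedge_le_left' (a b : G) : S.le (S.wedge a b) a := S.wedge_le_left a b
lemma wedge_le_right' (a b : G) : S.le (S.wedge a b) b := S.wedge_le_right a b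
lemma le_wedge' {a b c : G} (h1 : S.le c a) (h2 : S.le c b) : S.le c (S.wedge a b) :=
  S.le_wedge a b c h1 h2
lemma le_vee_left' (a b : G) : S.le a (S.vee a b) := S.le_vee_left a b
lemma le_vee_right' (a b : G) : S.le b (S.vee a b) := S.le_vee_right a b
lemma vee_le' {a b c : G} (h1 : S.le a c) (h2 : S.le b c) : S.le (S.vee a b) c :=
  S.vee_le a b c h1 h2

lemma wedge_comm (a b : G) : S.wedge a b = S.wedge b a :=
  S.le_antisymm' (S.le_wedge' (S.wedge_le_right' a b) (S.wedge_le_left' a b))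
    (S.le_wedge' (S.wedge_le_right' b a) (S.wedge_le_left' b a))

lemma wedge_eq_left {a b : G} (h : S.le a b) : S.wedge a b = a :=
  S.le_antisymm' (S.wedge_le_left' a b) (S.le_wedge' (S.le_refl' a) h)

lemma wedge_unique {a b c : G} (h1 : S.le c a) (h2 : S.le c b)
    (h3 : ∀ d, S.le d a → S.le d b → S.le d c) : S.wedge a b = c :=
  S.le_antisymm' (h3 _ (S.wedge_le_left' a b) (S.wedge_le_right' a b)) (S.le_wedge' h1 h2)

lemma wedge_pos {a b : G} (ha : a ∈ S.P) (hb : b ∈ S.P) : S.wedge a b ∈ S.P :=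
  S.pos_of_one_le (S.le_wedge' (S.one_le ha) (S.one_le hb))

lemma simple_one : S.IsSimple 1 := ⟨S.one_mem, S.one_le S.Δ_mem⟩
lemma simple_delta : S.IsSimple S.Δ := ⟨S.Δ_mem, S.le_refl' _⟩

lemma prod_pos {w : List G} (h : ∀ a ∈ w, a ∈ S.P) : w.prod ∈ S.P := by
  induction w with
  | nil => simpa using S.one_mem
  | cons a w ih =>
    rw [List.prod_cons]
    exact S.mul_mem (h a (by simp)) (ih fun x hx => h x (by simp [hx]))

lemma prod_ne_one {w : List G} (h : ∀ a ∈ w, a ∈ S.P ∧ a ≠ 1) (hw : w ≠ []) :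
    w.prod ≠ 1 := by
  cases w with
  | nil => exact absurd rfl hw
  | cons a w =>
    intro hc
    rw [List.prod_cons] at hc
    have hwp : w.prod ∈ S.P := S.prod_pos fun x hx => (h x (by simp [hx])).1
    have ha1 : a⁻¹ ∈ S.P := by
      have : a⁻¹ = w.prod := by
        have := congrArg (fun z => a⁻¹ * z) hc
        simpa [mul_assoc] using this.symm
      rw [this]; exact hwp
    exact (h a (by simp)).2 (S.inter_inv a (h a (by simp)).1 ha1)

/-- conjugation of a list product -/
lemma conj_prod (c : G) (w : List G) :
    (w.map (fun x => c * x * c⁻¹)).prod = c * w.prod * c⁻¹ := by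
  induction w with
  | nil => simp
  | cons a w ih =>
    simp only [List.map_cons, List.prod_cons, ih]
    group


lemma pow_mem_P (m : ℕ) : S.Δ ^ m ∈ S.P := by
  induction m with
  | zero => simpa using S.one_mem
  | succ m ih => rw [pow_succ]; exact S.mul_mem ih S.Δ_mem

lemma tau_simple {a : G} (ha : S.IsSimple a) : S.IsSimple (S.Δ⁻¹ * a * S.Δ) := by
  refine ⟨S.conj_mem a ha.1, ?_⟩
  have := S.conj_mem _ ha.2
  simpa [le, mul_assoc, mul_inv_rev] using this

lemma dt_simple {t : G} (ht : S.IsSimple t) : S.IsSimple (t⁻¹ * S.Δ) := by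
  refine ⟨ht.2, ?_⟩
  have := S.conj_mem t ht.1
  simpa [le, mul_assoc, mul_inv_rev] using this

lemma tauinv_simple (hft : S.FiniteType) {a : G} (ha : S.IsSimple a) :
    S.IsSimple (S.Δ * a * S.Δ⁻¹) := by
  have hinj : Set.InjOn (fun x => S.Δ⁻¹ * x * S.Δ) {x | S.IsSimple x} := by
    intro x _ y _ h
    simp only [mul_left_cancel_iff, mul_right_cancel_iff] at h
    exact h
  have hmaps : Set.MapsTo (fun x => S.Δ⁻¹ * x * S.Δ) {x | S.IsSimple x} {x | S.IsSimple x} :=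
    fun x hx => S.tau_simple hx
  have hbij := (hft.injOn_iff_bijOn_of_mapsTo hmaps).mp hinj
  obtain ⟨b, hb, heq⟩ := hbij.surjOn ha
  have : S.Δ * a * S.Δ⁻¹ = b := by
    simp only at heq
    rw [← heq]; group
  rw [this]; exact hb

lemma tauinv_pow_simple (hft : S.FiniteType) (m : ℕ) {a : G} (ha : S.IsSimple a) :
    S.IsSimple (S.Δ ^ m * a * (S.Δ ^ m)⁻¹) := by
  induction m with
  | zero => simpa using ha
  | succ m ih =>
    have := S.tauinv_simple hft ih
    have heq : S.Δ * (S.Δ ^ m * a * (S.Δ ^ m)⁻¹) * S.Δ⁻¹ = S.Δ ^ (m+1) * a * (S.Δ ^ (m+1))⁻¹ := by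
      rw [pow_succ]; group
    rwa [heq] at this

lemma tau_pow_simple (m : ℕ) {a : G} (ha : S.IsSimple a) :
    S.IsSimple ((S.Δ ^ m)⁻¹ * a * S.Δ ^ m) := by
  induction m with
  | zero => simpa using ha
  | succ m ih =>
    have := S.tau_simple ih
    have heq : S.Δ⁻¹ * ((S.Δ^m)⁻¹ * a * S.Δ^m) * S.Δ
        = (S.Δ^(m+1))⁻¹ * a * S.Δ^(m+1) := by rw [pow_succ]; group
    rwa [heq] at this

lemma simple_cancel_left : ∀ (w : List G) (t : G), S.IsSimple t → (∀ s ∈ w, S.IsSimple s) →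
    t⁻¹ * w.prod ∈ S.P → ∃ v : List G, (∀ s ∈ v, S.IsSimple s) ∧ v.prod = t⁻¹ * w.prod := by
  intro w
  induction w with
  | nil =>
    intro t ht _ hpos
    have ht1 : t = 1 := S.inter_inv t ht.1 (by simpa using hpos)
    exact ⟨[], by simp, by simp [ht1]⟩
  | cons s w ih =>
    intro t ht hws hpos
    have hs : S.IsSimple s := hws s (by simp)
    have hwsimple : ∀ x ∈ w, S.IsSimple x := fun x hx => hws x (by simp [hx])
    have hwpos : w.prod ∈ S.P := S.prod_pos fun x hx => (hwsimple x hx).1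
    set u := S.vee t s with hu
    have hu_le : S.le u S.Δ := S.vee_le' ht.2 hs.2
    have ha_pos : t⁻¹ * u ∈ S.P := S.le_vee_left t s
    have ha_le : S.le (t⁻¹*u) (t⁻¹*S.Δ) := by
      have h : (t⁻¹*u)⁻¹ * (t⁻¹*S.Δ) = u⁻¹ * S.Δ := by group
      unfold le; rw [h]; exact hu_le
    have ha_simple : S.IsSimple (t⁻¹*u) := ⟨ha_pos, S.le_trans' ha_le (S.dt_simple ht).2⟩
    have hb_pos : s⁻¹ * u ∈ S.P := S.le_vee_right t s
    have hb_le : S.le (s⁻¹*u) (s⁻¹*S.Δ) := by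
      have h : (s⁻¹*u)⁻¹ * (s⁻¹*S.Δ) = u⁻¹ * S.Δ := by group
      unfold le; rw [h]; exact hu_le
    have hb_simple : S.IsSimple (s⁻¹*u) := ⟨hb_pos, S.le_trans' hb_le (S.dt_simple hs).2⟩
    have hkey : u⁻¹ * (s * w.prod) ∈ S.P := by
      refine S.vee_le t s (s*w.prod) ?_ ?_
      · simpa [List.prod_cons, mul_assoc] using hpos
      · simpa [mul_assoc] using hwpos
    have hb_cancel : (s⁻¹*u)⁻¹ * w.prod ∈ S.P := by
      have h : (s⁻¹*u)⁻¹ * w.prod = u⁻¹ * (s * w.prod) := by group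
      rw [h]; exact hkey
    obtain ⟨v, hv, hvp⟩ := ih (s⁻¹*u) hb_simple hwsimple hb_cancel
    refine ⟨(t⁻¹*u) :: v, ?_, ?_⟩
    · intro x hx
      rcases List.mem_cons.mp hx with h | h
      · rw [h]; exact ha_simple
      · exact hv x h
    · rw [List.prod_cons, hvp, List.prod_cons]; group

lemma push_pow (hft : S.FiniteType) (m : ℕ) (w : List G) (hw : ∀ s ∈ w, S.IsSimple s) :
    ∃ w' : List G, (∀ s ∈ w', S.IsSimple s) ∧
      w.prod * (S.Δ^m)⁻¹ = (S.Δ^m)⁻¹ * w'.prod := by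
  refine ⟨w.map (fun x => S.Δ^m * x * (S.Δ^m)⁻¹), ?_, ?_⟩
  · intro s hs
    obtain ⟨x, hx, rfl⟩ := List.mem_map.mp hs
    exact S.tauinv_pow_simple hft m (hw x hx)
  · rw [conj_prod]; group

lemma inv_prod_simples (hft : S.FiniteType) :
    ∀ (w : List G), (∀ s ∈ w, S.IsSimple s) →
    ∃ w' : List G, (∀ s ∈ w', S.IsSimple s) ∧
      w.prod⁻¹ = (S.Δ ^ w.length)⁻¹ * w'.prod := by
  intro w
  induction w with
  | nil => exact fun _ => ⟨[], by simp, by simp⟩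
  | cons s w ih =>
    intro hws
    have hs : S.IsSimple s := hws s (by simp)
    obtain ⟨w', hw', hp⟩ := ih (fun x hx => hws x (by simp [hx]))
    have hds : S.IsSimple (s⁻¹ * S.Δ) := S.dt_simple hs
    obtain ⟨w'', hw'', hp2⟩ := S.push_pow hft 1 (w' ++ [s⁻¹ * S.Δ])
      (by intro x hx; rcases List.mem_append.mp hx with h | h
          · exact hw' x h
          · simp at h; rw [h]; exact hds)
    refine ⟨w'', hw'', ?_⟩
    have hlen : (s :: w).length = w.length + 1 := by simp
    rw [hlen, List.prod_cons, mul_inv_rev, hp]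
    have h1 : (w' ++ [s⁻¹ * S.Δ]).prod = w'.prod * (s⁻¹ * S.Δ) := by simp
    rw [h1] at hp2
    have h2 : s⁻¹ = (s⁻¹ * S.Δ) * (S.Δ^(1:ℕ))⁻¹ := by group
    calc (S.Δ ^ w.length)⁻¹ * w'.prod * s⁻¹
        = (S.Δ ^ w.length)⁻¹ * (w'.prod * (s⁻¹ * S.Δ) * (S.Δ^(1:ℕ))⁻¹) := by
          rw [← mul_assoc, ← mul_assoc]; rw [h2]; group
      _ = (S.Δ ^ w.length)⁻¹ * ((S.Δ^(1:ℕ))⁻¹ * w''.prod) := by rw [hp2]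
      _ = (S.Δ ^ (w.length + 1))⁻¹ * w''.prod := by rw [pow_succ]; group

lemma exists_pow_prod (hft : S.FiniteType) (g : G) :
    ∃ (m : ℕ) (w : List G), (∀ s ∈ w, S.IsSimple s) ∧ g = (S.Δ ^ m)⁻¹ * w.prod := by
  have hg : g ∈ Subgroup.closure {a : G | a ∈ S.P ∧ a⁻¹ * S.Δ ∈ S.P} := by
    rw [S.simples_generate]; trivial
  induction hg using Subgroup.closure_induction with
  | mem x hx => exact ⟨0, [x], fun s hs => by simp at hs; subst hs; exact hx, by simp⟩
  | one => exact ⟨0, [], by simp, by simp⟩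
  | mul x y _ _ hx hy =>
    obtain ⟨m, w, hw, rfl⟩ := hx
    obtain ⟨m', w', hw', rfl⟩ := hy
    obtain ⟨w'', hw'', hp⟩ := S.push_pow hft m' w hw
    refine ⟨m + m', w'' ++ w', ?_, ?_⟩
    · intro s hs
      rcases List.mem_append.mp hs with h | h
      · exact hw'' s h
      · exact hw' s h
    · rw [List.prod_append]
      have : (S.Δ^m)⁻¹ * w.prod * ((S.Δ^m')⁻¹ * w'.prod)
          = (S.Δ^m)⁻¹ * (w.prod * (S.Δ^m')⁻¹) * w'.prod := by group
      rw [this, hp, pow_add]; group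
  | inv x _ hx =>
    obtain ⟨m, w, hw, rfl⟩ := hx
    obtain ⟨w', hw', hp⟩ := S.inv_prod_simples hft w hw
    refine ⟨w.length + m, List.replicate (2*m) S.Δ ++
      w'.map (fun x => (S.Δ^m)⁻¹ * x * S.Δ^m), ?_, ?_⟩
    · intro s hs
      rcases List.mem_append.mp hs with h | h
      · rw [List.eq_of_mem_replicate h]; exact S.simple_delta
      · obtain ⟨y, hy, rfl⟩ := List.mem_map.mp h
        exact S.tau_pow_simple m (hw' y hy)
    · rw [List.prod_append, List.prod_replicate]
      have hc : (w'.map (fun x => (S.Δ^m)⁻¹ * x * ((S.Δ^m)⁻¹)⁻¹)).prod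
          = (S.Δ^m)⁻¹ * w'.prod * ((S.Δ^m)⁻¹)⁻¹ := conj_prod _ _
      simp only [inv_inv] at hc
      rw [hc, mul_inv_rev, inv_inv, hp, pow_add, two_mul, pow_add]
      group

lemma strip_aux : ∀ (m : ℕ) (Y : G), Y ∈ S.P → ∀ w : List G, (∀ s ∈ w, S.IsSimple s) →
    Y = (S.Δ ^ m)⁻¹ * w.prod → ∃ v : List G, (∀ s ∈ v, S.IsSimple s) ∧ Y = v.prod := by
  intro m
  induction m with
  | zero => intro Y _ w hw hEq; exact ⟨w, hw, by simpa using hEq⟩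
  | succ m ih =>
    intro Y hY w hw hEq
    have hZpos : S.Δ⁻¹ * w.prod ∈ S.P := by
      have h : S.Δ⁻¹ * w.prod = S.Δ^m * Y := by rw [hEq, pow_succ]; group
      rw [h]; exact S.mul_mem (S.pow_mem_P m) hY
    obtain ⟨v, hv, hvp⟩ := S.simple_cancel_left w S.Δ S.simple_delta hw hZpos
    refine ih Y hY v hv ?_
    rw [hvp, hEq, pow_succ]; group

lemma pos_eq_prod_simples (hft : S.FiniteType) {Y : G} (hY : Y ∈ S.P) :
    ∃ w : List G, (∀ s ∈ w, S.IsSimple s) ∧ Y = w.prod := by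
  obtain ⟨m, w, hw, hEq⟩ := S.exists_pow_prod hft Y
  exact S.strip_aux m Y hY w hw hEq

lemma tauinv_pos (hft : S.FiniteType) {a : G} (ha : a ∈ S.P) : S.Δ * a * S.Δ⁻¹ ∈ S.P := by
  obtain ⟨w, hw, rfl⟩ := S.pos_eq_prod_simples hft ha
  rw [← conj_prod]
  exact S.prod_pos fun x hx => by
    obtain ⟨y, hy, rfl⟩ := List.mem_map.mp hx
    exact (S.tauinv_simple hft (hw y hy)).1

lemma conj_zpow_pos (hft : S.FiniteType) (j : ℤ) {a : G} (ha : a ∈ S.P) :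
    S.Δ ^ j * a * (S.Δ ^ j)⁻¹ ∈ S.P := by
  induction j using Int.induction_on with
  | zero => simpa using ha
  | succ i ih =>
    have := S.tauinv_pos hft ih
    have heq : S.Δ * (S.Δ ^ (i:ℤ) * a * (S.Δ ^ (i:ℤ))⁻¹) * S.Δ⁻¹
        = S.Δ ^ ((i:ℤ)+1) * a * (S.Δ ^ ((i:ℤ)+1))⁻¹ := by
      rw [zpow_add_one]; group
    rwa [heq] at this
  | pred i ih =>
    have := S.conj_mem _ ih
    have heq : S.Δ⁻¹ * (S.Δ ^ (-(i:ℤ)) * a * (S.Δ ^ (-(i:ℤ)))⁻¹) * S.Δ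
        = S.Δ ^ (-(i:ℤ)-1) * a * (S.Δ ^ (-(i:ℤ)-1))⁻¹ := by
      rw [zpow_sub_one]; group
    rwa [heq] at this


lemma conj_zpow_le (hft : S.FiniteType) (j : ℤ) {a b : G} (h : S.le a b) :
    S.le (S.Δ^j * a * (S.Δ^j)⁻¹) (S.Δ^j * b * (S.Δ^j)⁻¹) := by
  have := S.conj_zpow_pos hft j h
  unfold le at *
  have heq : (S.Δ^j * a * (S.Δ^j)⁻¹)⁻¹ * (S.Δ^j * b * (S.Δ^j)⁻¹)
      = S.Δ^j * (a⁻¹ * b) * (S.Δ^j)⁻¹ := by group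
  rw [heq]; exact this

lemma conj_zpow_le_iff (hft : S.FiniteType) (j : ℤ) {a b : G} :
    S.le (S.Δ^j * a * (S.Δ^j)⁻¹) (S.Δ^j * b * (S.Δ^j)⁻¹) ↔ S.le a b := by
  constructor
  · intro h
    have := S.conj_zpow_le hft (-j) h
    have heq : ∀ x : G, S.Δ^(-j) * (S.Δ^j * x * (S.Δ^j)⁻¹) * (S.Δ^(-j))⁻¹ = x := by
      intro x; rw [zpow_neg]; group
    rwa [heq, heq] at this
  · exact S.conj_zpow_le hft j

lemma conj_zpow_delta (j : ℤ) : S.Δ^j * S.Δ * (S.Δ^j)⁻¹ = S.Δ := by group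

lemma conj_zpow_simple (hft : S.FiniteType) (j : ℤ) {a : G} (ha : S.IsSimple a) :
    S.IsSimple (S.Δ^j * a * (S.Δ^j)⁻¹) := by
  refine ⟨S.conj_zpow_pos hft j ha.1, ?_⟩
  have := S.conj_zpow_le hft j ha.2
  rwa [S.conj_zpow_delta] at this

lemma conj_zpow_wedge (hft : S.FiniteType) (j : ℤ) (a b : G) :
    S.Δ^j * (S.wedge a b) * (S.Δ^j)⁻¹
      = S.wedge (S.Δ^j * a * (S.Δ^j)⁻¹) (S.Δ^j * b * (S.Δ^j)⁻¹) := by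
  symm
  refine S.wedge_unique (S.conj_zpow_le hft j (S.wedge_le_left' a b))
    (S.conj_zpow_le hft j (S.wedge_le_right' a b)) ?_
  intro d hd1 hd2
  have hd1' : S.le (S.Δ^(-j) * d * (S.Δ^(-j))⁻¹) a := by
    have := S.conj_zpow_le hft (-j) hd1
    have heq : ∀ x : G, S.Δ^(-j) * (S.Δ^j * x * (S.Δ^j)⁻¹) * (S.Δ^(-j))⁻¹ = x := by
      intro x; rw [zpow_neg]; group
    rwa [heq] at this
  have hd2' : S.le (S.Δ^(-j) * d * (S.Δ^(-j))⁻¹) b := by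
    have := S.conj_zpow_le hft (-j) hd2
    have heq : ∀ x : G, S.Δ^(-j) * (S.Δ^j * x * (S.Δ^j)⁻¹) * (S.Δ^(-j))⁻¹ = x := by
      intro x; rw [zpow_neg]; group
    rwa [heq] at this
  have := S.conj_zpow_le hft j (S.le_wedge' hd1' hd2')
  have heq : S.Δ^j * (S.Δ^(-j) * d * (S.Δ^(-j))⁻¹) * (S.Δ^j)⁻¹ = d := by
    rw [zpow_neg]; group
  rwa [heq] at this

lemma conj_zpow_lw (hft : S.FiniteType) (j : ℤ) {a b : G} (h : S.LeftWeighted a b) :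
    S.LeftWeighted (S.Δ^j * a * (S.Δ^j)⁻¹) (S.Δ^j * b * (S.Δ^j)⁻¹) := by
  have h' : a = S.wedge (a * b) S.Δ := h
  show S.Δ^j * a * (S.Δ^j)⁻¹
      = S.wedge (S.Δ^j * a * (S.Δ^j)⁻¹ * (S.Δ^j * b * (S.Δ^j)⁻¹)) S.Δ
  have heq : S.Δ^j * a * (S.Δ^j)⁻¹ * (S.Δ^j * b * (S.Δ^j)⁻¹)
      = S.Δ^j * (a*b) * (S.Δ^j)⁻¹ := by group
  have h2 : S.wedge (S.Δ^j * (a*b) * (S.Δ^j)⁻¹) S.Δ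
      = S.wedge (S.Δ^j * (a*b) * (S.Δ^j)⁻¹) (S.Δ^j * S.Δ * (S.Δ^j)⁻¹) := by
    rw [S.conj_zpow_delta]
  rw [heq, h2, ← S.conj_zpow_wedge hft j, ← h']

lemma lw_iff {B C : G} (hB : S.IsSimple B) (hC : C ∈ S.P) :
    S.LeftWeighted B C ↔ S.wedge (B⁻¹ * S.Δ) C = 1 := by
  constructor
  · intro h
    set d := S.wedge (B⁻¹ * S.Δ) C with hd
    have hdpos : d ∈ S.P := S.wedge_pos (S.dt_simple hB).1 hC
    have h1 : S.le (B*d) (B*C) := S.le_mul (S.wedge_le_right' _ _)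
    have h2 : S.le (B*d) S.Δ := by
      have := S.le_mul (a := B) (S.wedge_le_left' (B⁻¹ * S.Δ) C)
      have heq : B * (B⁻¹ * S.Δ) = S.Δ := by group
      rwa [heq] at this
    have h' : B = S.wedge (B*C) S.Δ := h
    have h3 : S.le (B*d) B := by
      have h4 := S.le_wedge' h1 h2
      rwa [← h'] at h4
    have hdinv : d⁻¹ ∈ S.P := by
      have : (B*d)⁻¹ * B = d⁻¹ := by group
      rw [← this]; exact h3
    exact S.inter_inv d hdpos hdinv
  · intro h
    show B = S.wedge (B*C) S.Δ
    symm
    refine S.wedge_unique (S.le_mul_right hC) hB.2 ?_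
    intro d hd1 hd2
    set u := S.vee B d with hu
    have huBC : S.le u (B*C) := S.vee_le' (S.le_mul_right hC) hd1
    have huD : S.le u S.Δ := S.vee_le' hB.2 hd2
    have he_pos : B⁻¹ * u ∈ S.P := S.le_vee_left B d
    have heC : S.le (B⁻¹*u) C := by
      have := S.le_of_le_mul (a := B) (b := B⁻¹*u) (c := C) ?_
      · exact this
      · have heq : B * (B⁻¹ * u) = u := by group
        rwa [heq]
    have heDB : S.le (B⁻¹*u) (B⁻¹*S.Δ) := by
      unfold le
      have heq : (B⁻¹*u)⁻¹ * (B⁻¹*S.Δ) = u⁻¹ * S.Δ := by group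
      rw [heq]; exact huD
    have : S.le (B⁻¹*u) 1 := by
      rw [← h]; exact S.le_wedge' heDB heC
    have he1 : B⁻¹*u = 1 := S.eq_one_of_le_one he_pos this
    have huB : u = B := by
      have : B * (B⁻¹ * u) = B * 1 := by rw [he1]
      simpa [mul_assoc] using this
    rw [← huB]
    exact S.le_vee_right' B d

lemma nfhead : ∀ (t : List G) (a : G), S.IsSimple a → (∀ x ∈ t, S.IsSimple x) →
    List.Chain' S.LeftWeighted (a :: t) → S.wedge (a :: t).prod S.Δ = a := by
  intro t
  induction t with
  | nil =>
    intro a ha _ _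
    simp only [List.prod_cons, List.prod_nil, mul_one]
    exact S.wedge_eq_left ha.2
  | cons b t' ih =>
    intro a ha hsim hch
    have hb : S.IsSimple b := hsim b (by simp)
    have ht' : ∀ x ∈ t', S.IsSimple x := fun x hx => hsim x (by simp [hx])
    have hch' : List.Chain' S.LeftWeighted (b :: t') := hch.tail
    have hlw : S.LeftWeighted a b := List.isChain_cons_cons.mp hch |>.1
    have hIH := ih b hb ht' hch'
    have hrest_pos : (b :: t').prod ∈ S.P :=
      S.prod_pos fun x hx => by
        rcases List.mem_cons.mp hx with h | h
        · rw [h]; exact hb.1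
        · exact (ht' x h).1
    refine S.wedge_unique ?_ ha.2 ?_
    · have : S.le a (a * (b :: t').prod) := S.le_mul_right hrest_pos
      simpa [List.prod_cons] using this
    · intro d hd1 hd2
      set u := S.vee a d with hu
      have hu1 : S.le u (a :: b :: t').prod := S.vee_le' (by
        have : S.le a (a * (b :: t').prod) := S.le_mul_right hrest_pos
        simpa [List.prod_cons] using this) hd1
      have huD : S.le u S.Δ := S.vee_le' ha.2 hd2
      have he_pos : a⁻¹ * u ∈ S.P := S.le_vee_left a d
      have he1 : S.le (a⁻¹*u) (b :: t').prod := by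
        refine S.le_of_le_mul (a := a) ?_
        have heq : a * (a⁻¹ * u) = u := by group
        rw [heq]
        simpa [List.prod_cons] using hu1
      have he2 : S.le (a⁻¹*u) (a⁻¹*S.Δ) := by
        unfold le
        have heq : (a⁻¹*u)⁻¹ * (a⁻¹*S.Δ) = u⁻¹ * S.Δ := by group
        rw [heq]; exact huD
      have he3 : S.le (a⁻¹*u) S.Δ := S.le_trans' he2 (S.dt_simple ha).2
      have heb : S.le (a⁻¹*u) b := by
        rw [← hIH]; exact S.le_wedge' he1 he3
      have : S.le (a⁻¹*u) 1 := by
        rw [← (S.lw_iff ha hb.1).mp hlw]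
        exact S.le_wedge' he2 heb
      have he0 : a⁻¹*u = 1 := S.eq_one_of_le_one he_pos this
      have hua : u = a := by
        have : a * (a⁻¹ * u) = a * 1 := by rw [he0]
        simpa [mul_assoc] using this
      rw [← hua]
      exact S.le_vee_right' a d


/-! ### norm and atom lemmas -/

lemma norm_set_mem {x : G} (hx : x ∈ S.P) (hne : x ≠ 1) :
    1 ∈ {k : ℕ | ∃ w : List G, w.length = k ∧ (∀ a ∈ w, a ∈ S.P ∧ a ≠ 1) ∧ w.prod = x} :=
  ⟨[x], by simp, by simpa using ⟨hx, hne⟩, by simp⟩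

lemma norm_one' : S.norm 1 = 0 := by
  unfold norm
  have h : {k : ℕ | ∃ w : List G, w.length = k ∧ (∀ a ∈ w, a ∈ S.P ∧ a ≠ 1) ∧ w.prod = (1:G)}
      = {0} := by
    ext k
    simp only [Set.mem_setOf_eq, Set.mem_singleton_iff]
    constructor
    · rintro ⟨w, hlen, hcond, hprod⟩
      by_contra hk
      have hw : w ≠ [] := by intro hc; rw [hc] at hlen; simp at hlen; omega
      exact S.prod_ne_one hcond hw hprod
    · rintro rfl; exact ⟨[], by simp, by simp, by simp⟩
  rw [h]; simp

lemma norm_pos {x : G} (hx : x ∈ S.P) (hne : x ≠ 1) : 1 ≤ S.norm x :=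
  le_csSup (S.len_bdd x hx hne) (S.norm_set_mem hx hne)

lemma norm_attained {x : G} (hx : x ∈ S.P) (hne : x ≠ 1) :
    ∃ w : List G, w.length = S.norm x ∧ (∀ a ∈ w, a ∈ S.P ∧ a ≠ 1) ∧ w.prod = x :=
  Nat.sSup_mem ⟨1, S.norm_set_mem hx hne⟩ (S.len_bdd x hx hne)

lemma atom_norm_one {x : G} (hx : S.IsAtom' x) : S.norm x = 1 := by
  obtain ⟨hxP, hx1, hnd⟩ := hx
  refine le_antisymm ?_ (S.norm_pos hxP hx1)
  refine csSup_le ⟨1, S.norm_set_mem hxP hx1⟩ ?_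
  rintro k ⟨w, hlen, hcond, hprod⟩
  by_contra hk
  push_neg at hk
  match w, hlen with
  | a :: b :: t, hlen =>
    exfalso
    refine hnd ⟨a, (b :: t).prod, (hcond a (by simp)).1, (hcond a (by simp)).2, ?_, ?_, ?_⟩
    · exact S.prod_pos fun z hz => (hcond z (by simp [hz])).1
    · exact S.prod_ne_one (fun z hz => hcond z (by simp [hz])) (by simp)
    · rw [← hprod, List.prod_cons]
  | [], hlen => simp at hlen; omega
  | [a], hlen => simp at hlen; omega

lemma atom_of_norm_one {x : G} (hxP : x ∈ S.P) (hn : S.norm x = 1) : S.IsAtom' x := by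
  have hx1 : x ≠ 1 := by intro hc; rw [hc, S.norm_one'] at hn; omega
  refine ⟨hxP, hx1, ?_⟩
  rintro ⟨b, c, hbP, hb1, hcP, hc1, rfl⟩
  have : 2 ∈ {k : ℕ | ∃ w : List G, w.length = k ∧ (∀ a ∈ w, a ∈ S.P ∧ a ≠ 1) ∧ w.prod = b*c} :=
    ⟨[b, c], by simp, by
      intro a ha
      rcases List.mem_cons.mp ha with rfl | ha
      · exact ⟨hbP, hb1⟩
      · rcases List.mem_cons.mp ha with rfl | ha
        · exact ⟨hcP, hc1⟩
        · simp at ha, by simp⟩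
  have := le_csSup (S.len_bdd _ hxP hx1) this
  unfold norm at hn
  omega

lemma atom_le_cases {x c : G} (hx : S.IsAtom' x) (hc : c ∈ S.P) (h : S.le c x) :
    c = 1 ∨ c = x := by
  by_cases h1 : c = 1
  · exact Or.inl h1
  by_cases h2 : c⁻¹ * x = 1
  · right
    have : c * (c⁻¹ * x) = c * 1 := by rw [h2]
    simpa [mul_assoc] using this.symm
  · exfalso
    exact hx.2.2 ⟨c, c⁻¹*x, hc, h1, h, h2, by group⟩

lemma exists_atom_le {c : G} (hc : c ∈ S.P) (hne : c ≠ 1) :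
    ∃ y : G, S.IsAtom' y ∧ S.le y c := by
  obtain ⟨w, hlen, hcond, hprod⟩ := S.norm_attained hc hne
  have hn1 : 1 ≤ S.norm c := S.norm_pos hc hne
  match w, hlen, hprod with
  | a :: t, hlen, hprod =>
    refine ⟨a, ?_, ?_⟩
    · refine ⟨(hcond a (by simp)).1, (hcond a (by simp)).2, ?_⟩
      rintro ⟨b, e, hbP, hb1, heP, he1, hbe⟩
      have : S.norm c + 1 ∈
          {k : ℕ | ∃ w : List G, w.length = k ∧ (∀ z ∈ w, z ∈ S.P ∧ z ≠ 1) ∧ w.prod = c} := by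
        refine ⟨b :: e :: t, by simp at hlen ⊢; omega, ?_, ?_⟩
        · rintro z hz
          rcases List.mem_cons.mp hz with rfl | hz
          · exact ⟨hbP, hb1⟩
          rcases List.mem_cons.mp hz with rfl | hz
          · exact ⟨heP, he1⟩
          · exact hcond z (by simp [hz])
        · rw [← hprod, List.prod_cons, List.prod_cons, List.prod_cons, hbe, mul_assoc]
      have := le_csSup (S.len_bdd c hc hne) this
      unfold norm at this
      omega
    · unfold le
      have : a⁻¹ * c = t.prod := by rw [← hprod, List.prod_cons]; group
      rw [this]
      exact S.prod_pos fun z hz => (hcond z (by simp [hz])).1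
  | [], hlen, hprod => simp at hlen; omega

lemma prod_simples_nontrivial : ∀ w : List G, (∀ s ∈ w, S.IsSimple s) →
    ∃ w' : List G, (∀ s ∈ w', S.IsSimple s ∧ s ≠ 1) ∧ w'.prod = w.prod := by
  intro w
  induction w with
  | nil => exact fun _ => ⟨[], by simp, rfl⟩
  | cons a t ih =>
    intro hw
    obtain ⟨w', hw', hp⟩ := ih fun x hx => hw x (by simp [hx])
    by_cases ha : a = 1
    · exact ⟨w', hw', by rw [hp, List.prod_cons, ha, one_mul]⟩
    · refine ⟨a :: w', ?_, by rw [List.prod_cons, List.prod_cons, hp]⟩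
      rintro s hs
      rcases List.mem_cons.mp hs with rfl | hs
      · exact ⟨hw s (by simp), ha⟩
      · exact hw' s hs

lemma atom_simple (hft : S.FiniteType) {x : G} (hx : S.IsAtom' x) : S.IsSimple x := by
  obtain ⟨w, hw, hprod⟩ := S.pos_eq_prod_simples hft hx.1
  obtain ⟨w', hw', hp⟩ := S.prod_simples_nontrivial w hw
  rw [← hp] at hprod
  match w', hw', hprod with
  | [], hw', hprod => exact absurd (by simpa using hprod) hx.2.1
  | [a], hw', hprod =>
    have : x = a := by simpa using hprod
    rw [this]; exact (hw' a (by simp)).1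
  | a :: b :: t, hw', hprod =>
    exfalso
    refine hx.2.2 ⟨a, (b :: t).prod, (hw' a (by simp)).1.1, (hw' a (by simp)).2, ?_, ?_, ?_⟩
    · exact S.prod_pos fun z hz => (hw' z (by simp [hz])).1.1
    · exact S.prod_ne_one (fun z hz => ⟨(hw' z (by simp [hz])).1.1, (hw' z (by simp [hz])).2⟩)
        (by simp)
    · rw [hprod, List.prod_cons]

lemma le_pow_delta : ∀ w : List G, (∀ s ∈ w, S.IsSimple s) → S.le w.prod (S.Δ ^ w.length) := by
  intro w
  induction w with
  | nil => simpa using S.le_refl' 1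
  | cons s t ih =>
    intro hw
    have h1 : S.le (s * t.prod) (s * S.Δ ^ t.length) := S.le_mul (ih fun x hx => hw x (by simp [hx]))
    have h2 : S.le (s * S.Δ ^ t.length) (S.Δ ^ (t.length + 1)) := by
      unfold le
      have heq : (s * S.Δ ^ t.length)⁻¹ * S.Δ ^ (t.length + 1)
          = (S.Δ ^ t.length)⁻¹ * (s⁻¹ * S.Δ) * S.Δ ^ t.length := by
        rw [pow_succ']; group
      rw [heq]
      exact (S.tau_pow_simple t.length (S.dt_simple (hw s (by simp)))).1
    have := S.le_trans' h1 h2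
    simpa [List.prod_cons] using this

lemma dbar_simple (hft : S.FiniteType) {B : G} (hB : S.IsSimple B) :
    S.IsSimple (S.Δ * B⁻¹) := by
  constructor
  · have := S.tauinv_pos hft (S.dt_simple hB).1
    have heq : S.Δ * (B⁻¹ * S.Δ) * S.Δ⁻¹ = S.Δ * B⁻¹ := by group
    rwa [heq] at this
  · unfold le
    have heq : (S.Δ * B⁻¹)⁻¹ * S.Δ = B := by group
    rw [heq]; exact hB.1

/-- key pair lemma for inverses of normal forms -/
lemma inv_pair (hft : S.FiniteType) {B C : G} (hB : S.IsSimple B) (hC : S.IsSimple C)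
    (h : S.LeftWeighted B C) :
    S.LeftWeighted (S.Δ * (S.Δ * C⁻¹) * S.Δ⁻¹) (S.Δ * B⁻¹) := by
  have hX : S.IsSimple (S.Δ * (S.Δ * C⁻¹) * S.Δ⁻¹) := by
    have := S.tauinv_simple hft (S.dbar_simple hft hC)
    simpa using this
  rw [S.lw_iff hX (S.dbar_simple hft hB).1]
  have h1 : (S.Δ * (S.Δ * C⁻¹) * S.Δ⁻¹)⁻¹ * S.Δ = S.Δ^(1:ℤ) * C * (S.Δ^(1:ℤ))⁻¹ := by group
  have h2 : S.Δ * B⁻¹ = S.Δ^(1:ℤ) * (B⁻¹ * S.Δ) * (S.Δ^(1:ℤ))⁻¹ := by group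
  rw [h1, h2, ← S.conj_zpow_wedge hft 1]
  rw [S.wedge_comm, (S.lw_iff hB hC.1).mp h]
  group


/-! ### the inverse word -/



lemma listGetD_lt {α : Type*} [One α] (l : List α) {i : ℕ} (h : i < l.length) :
    l.getD i 1 = l[i] := by
  simp [List.getD_eq_getElem?_getD, List.getElem?_eq_getElem h]

/-- the factors of the normal form of the inverse -/
def invA (L : List G) (i : ℕ) : G := S.Δ^(i+1) * (L.getD i 1)⁻¹ * (S.Δ^i)⁻¹

/-- the word of the normal form of the inverse -/
def invW (L : List G) : List G := ((List.range L.length).map (S.invA L)).reverse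

lemma invA_eq (L : List G) (i : ℕ) :
    S.invA L i = S.Δ^(i:ℤ) * (S.Δ * (L.getD i 1)⁻¹) * (S.Δ^(i:ℤ))⁻¹ := by
  unfold invA
  rw [zpow_natCast, pow_succ']
  group

lemma invW_length (L : List G) : (S.invW L).length = L.length := by simp [invW]

lemma invW_prod_aux (L : List G) :
    ∀ m, m ≤ L.length → (((List.range m).map (S.invA L)).reverse).prod
      = S.Δ^m * ((L.take m).prod)⁻¹ := by
  intro m
  induction m with
  | zero => simp
  | succ m ih =>
    intro hm
    have hmlt : m < L.length := by omega
    rw [List.range_succ, List.map_append, List.reverse_append]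
    simp only [List.map_cons, List.map_nil, List.reverse_cons, List.reverse_nil,
      List.nil_append, List.singleton_append, List.prod_cons]
    rw [ih (by omega)]
    rw [List.prod_take_succ L m hmlt]
    unfold invA
    rw [listGetD_lt L hmlt, pow_succ]
    group

lemma invW_prod (L : List G) : (S.invW L).prod = S.Δ^L.length * (L.prod)⁻¹ := by
  unfold invW
  rw [S.invW_prod_aux L L.length le_rfl, List.take_length]

lemma invW_mem {x : G} {L : List G} (hx : x ∈ S.invW L) :
    ∃ i : ℕ, i < L.length ∧ x = S.invA L i := by
  unfold invW at hx
  rw [List.mem_reverse] at hx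
  obtain ⟨i, hi, rfl⟩ := List.mem_map.mp hx
  exact ⟨i, List.mem_range.mp hi, rfl⟩

lemma invW_factors (hft : S.FiniteType) {L : List G}
    (hL : ∀ a ∈ L, S.IsSimple a ∧ a ≠ 1 ∧ a ≠ S.Δ) :
    ∀ x ∈ S.invW L, S.IsSimple x ∧ x ≠ 1 ∧ x ≠ S.Δ := by
  intro x hx
  obtain ⟨i, hi, rfl⟩ := S.invW_mem hx
  have hBmem : L.getD i 1 ∈ L := by rw [listGetD_lt L hi]; exact List.getElem_mem hi
  obtain ⟨hBs, hB1, hBd⟩ := hL _ hBmem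
  rw [S.invA_eq]
  refine ⟨S.conj_zpow_simple hft i (S.dbar_simple hft hBs), ?_, ?_⟩
  · intro hc
    have h2 : S.Δ * (L.getD i 1)⁻¹ = 1 := by
      have := congrArg (fun z => (S.Δ^(i:ℤ))⁻¹ * z * S.Δ^(i:ℤ)) hc
      simpa [mul_assoc] using this
    exact hBd (mul_inv_eq_one.mp h2).symm
  · intro hc
    have h2 : S.Δ * (L.getD i 1)⁻¹ = S.Δ := by
      have := congrArg (fun z => (S.Δ^(i:ℤ))⁻¹ * z * S.Δ^(i:ℤ)) hc
      calc S.Δ * (L.getD i 1)⁻¹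
          = (S.Δ^(i:ℤ))⁻¹ * (S.Δ^(i:ℤ) * (S.Δ * (L.getD i 1)⁻¹) * (S.Δ^(i:ℤ))⁻¹) * S.Δ^(i:ℤ) := by
            group
        _ = (S.Δ^(i:ℤ))⁻¹ * S.Δ * S.Δ^(i:ℤ) := by rw [hc]
        _ = S.Δ := by group
    have h3 : (L.getD i 1)⁻¹ = 1 := mul_left_cancel (h2.trans (mul_one S.Δ).symm)
    exact hB1 (inv_eq_one.mp h3)

lemma invW_chain (hft : S.FiniteType) {L : List G}
    (hL : ∀ a ∈ L, S.IsSimple a) (hch : List.Chain' S.LeftWeighted L) :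
    List.Chain' S.LeftWeighted (S.invW L) := by
  unfold invW
  rw [List.Chain', List.isChain_reverse, List.isChain_iff_getElem]
  intro i h
  simp only [List.length_map, List.length_range] at h
  have hi1 : i + 1 < L.length := by omega
  have hget : ∀ (j : ℕ) (hj : j < L.length),
      ((List.range L.length).map (S.invA L))[j]'(by simp; omega) = S.invA L j := by
    intro j hj
    simp
  rw [hget i (by omega), hget (i+1) (by omega)]
  show S.LeftWeighted (S.invA L (i+1)) (S.invA L i)
  have hB : S.IsSimple L[i] := hL _ (List.getElem_mem (by omega))
  have hC : S.IsSimple L[i+1] := hL _ (List.getElem_mem hi1)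
  have hlw : S.LeftWeighted L[i] L[i+1] := by
    have := List.isChain_iff_getElem.mp hch i (by omega)
    simpa [List.get_eq_getElem] using this
  have hpair := S.inv_pair hft hB hC hlw
  have hconj := S.conj_zpow_lw hft (i:ℤ) hpair
  have e1 : S.Δ^(i:ℤ) * (S.Δ * (S.Δ * L[i+1]⁻¹) * S.Δ⁻¹) * (S.Δ^(i:ℤ))⁻¹ = S.invA L (i+1) := by
    rw [S.invA_eq, listGetD_lt L hi1]
    push_cast
    rw [zpow_add_one]
    group
  have e2 : S.Δ^(i:ℤ) * (S.Δ * L[i]⁻¹) * (S.Δ^(i:ℤ))⁻¹ = S.invA L i := by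
    rw [S.invA_eq, listGetD_lt L (by omega : i < L.length)]
  rwa [e1, e2] at hconj

end GarsideStructure

namespace GarsideStructureNF

open GarsideStructure

variable {G : Type*} [Group G] (S : GarsideStructureNF G)

lemma delta_ne_one : S.Δ ≠ 1 := by
  intro h
  have h0 := (S.nf_unique 1 0 [] (by simp) List.isChain_nil (by simp)).1
  have h1 := (S.nf_unique 1 1 [] (by simp) List.isChain_nil (by simp [h])).1
  rw [← h0] at h1
  exact absurd h1 (by norm_num)

lemma nfInf_nonneg {Y : G} (hY : Y ∈ S.P) : 0 ≤ S.nfInf Y := by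
  by_contra hneg
  push_neg at hneg
  obtain ⟨p, w, hprod, hfac, hch, hplt⟩ :
      ∃ (p : ℤ) (w : List G), Y = S.Δ ^ p * w.prod ∧
        (∀ a ∈ w, S.IsSimple a ∧ a ≠ 1 ∧ a ≠ S.Δ) ∧
        List.Chain' S.LeftWeighted w ∧ p < 0 :=
    ⟨S.nfInf Y, S.nfWord Y, S.nf_prod Y, S.nf_factors Y, S.nf_chain Y, hneg⟩
  have hD : S.le S.Δ w.prod := by
    show S.Δ⁻¹ * w.prod ∈ S.P
    have h1 : S.Δ⁻¹ * w.prod = S.Δ^(-p-1) * Y := by rw [hprod]; group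
    rw [h1]
    have hnat : S.Δ^(-p-1) = S.Δ^((-p-1).toNat) := by
      rw [← zpow_natCast, Int.toNat_of_nonneg (by omega)]
    rw [hnat]
    exact S.mul_mem (S.pow_mem_P _) hY
  cases w with
  | nil =>
    simp only [List.prod_nil] at hD
    exact S.delta_ne_one (S.eq_one_of_le_one S.Δ_mem hD)
  | cons a t =>
    have hhead := S.toGarsideStructure.nfhead t a (hfac a (by simp)).1
      (fun x hx => (hfac x (by simp [hx])).1) hch
    have hDa : S.le S.Δ a := by
      rw [← hhead]
      exact S.le_wedge' hD (S.le_refl' _)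
    exact (hfac a (by simp)).2.2 (S.le_antisymm' (hfac a (by simp)).1.2 hDa)

lemma sup_le (hft : S.FiniteType) {Y : G} (hY : Y ∈ S.P) {n : ℕ}
    (hle : S.le Y (S.Δ^n)) :
    S.nfInf Y + ((S.nfWord Y).length : ℤ) ≤ (n : ℤ) := by
  set p := S.nfInf Y with hp
  set L := S.nfWord Y with hLdef
  have hp0 : 0 ≤ p := S.nfInf_nonneg hY
  have hprod : Y = S.Δ ^ p * L.prod := S.nf_prod Y
  set V : G := S.Δ^(n:ℤ) * Y⁻¹ with hV
  have hVpos : V ∈ S.P := by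
    have h1 : Y⁻¹ * S.Δ^n ∈ S.P := hle
    have h2 := S.conj_zpow_pos hft (n:ℤ) h1
    have heq : S.Δ^(n:ℤ) * (Y⁻¹ * S.Δ^n) * (S.Δ^(n:ℤ))⁻¹ = V := by
      rw [hV, ← zpow_natCast S.Δ n]; group
    rwa [heq] at h2
  set w : List G := (S.invW L).map (fun x => S.Δ^p * x * (S.Δ^p)⁻¹) with hwdef
  have hfac : ∀ a ∈ w, S.IsSimple a ∧ a ≠ 1 ∧ a ≠ S.Δ := by
    intro a ha
    obtain ⟨x, hx, rfl⟩ := List.mem_map.mp ha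
    obtain ⟨hxs, hx1, hxd⟩ := S.toGarsideStructure.invW_factors hft (S.nf_factors Y) x hx
    refine ⟨S.conj_zpow_simple hft p hxs, ?_, ?_⟩
    · intro hc
      have : x = 1 := by
        have := congrArg (fun z => (S.Δ^p)⁻¹ * z * S.Δ^p) hc
        simpa [mul_assoc] using this
      exact hx1 this
    · intro hc
      have : x = S.Δ := by
        calc x = (S.Δ^p)⁻¹ * (S.Δ^p * x * (S.Δ^p)⁻¹) * S.Δ^p := by group
          _ = (S.Δ^p)⁻¹ * S.Δ * S.Δ^p := by rw [hc]
          _ = S.Δ := by group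
      exact hxd this
  have hch : List.Chain' S.LeftWeighted w := by
    rw [hwdef]
    have hinv := S.toGarsideStructure.invW_chain hft
      (fun a ha => (S.nf_factors Y a ha).1) (S.nf_chain Y)
    exact List.isChain_map_of_isChain _ (fun a b hab => S.conj_zpow_lw hft p hab) hinv
  have hVeq : V = S.Δ^((n:ℤ) - (L.length:ℤ) - p) * w.prod := by
    have h1 : w.prod = S.Δ^p * ((S.invW L).prod) * (S.Δ^p)⁻¹ := GarsideStructure.conj_prod _ _
    rw [h1, S.toGarsideStructure.invW_prod]
    rw [hV, hprod]
    rw [← zpow_natCast S.Δ L.length]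
    group
  have huniq := S.nf_unique V ((n:ℤ) - (L.length:ℤ) - p) w hfac hch hVeq
  have h0 := S.nfInf_nonneg hVpos
  rw [← huniq.1] at h0
  omega

end GarsideStructureNF

end Aux


lemma chain'_replicate_self {α : Type*} {R : α → α → Prop} {a : α} (h : R a a) :
    ∀ m : ℕ, List.Chain' R (List.replicate m a) := by
  intro m
  induction m with
  | zero => exact List.isChain_nil
  | succ m ih =>
    rw [List.replicate_succ]
    cases m with
    | zero => exact List.isChain_singleton _
    | succ m' =>
      rw [List.replicate_succ]
      rw [List.replicate_succ] at ih
      exact List.isChain_cons_cons.mpr ⟨h, ih⟩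

/-- **Lemma 3.2** (Orevkov): in a symmetric homogeneous Garside structure of finite type
(square free when `k ≥ 2`), let `X = P⁻¹ x₁^k P` with `x₁` an atom, `P` positive,
`inf P = 0`, `ℓ(P) = n ≥ 1`; let `B₁ ⋯ B_n` be the left normal form of `P` and define
`A_i` by `A_i δ^{i-1} B_i = δ^i`.  Then either `δ^{-n} · A_n ⋯ A₁ · x₁^k · B₁ ⋯ B_n` is
the left normal form of `X`, or `X = Q⁻¹ x₂^k Q` for an atom `x₂` conjugate to `x₁` and a
positive `Q` with `‖Q‖ < ‖P‖` and `ℓ(Q) ≤ ℓ(P)`. -/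
theorem statement10 {G : Type*} [Group G] (S : GarsideStructureNF G)
    (hft : S.FiniteType) (hsym : S.IsSymmetric) (hhom : S.Homogeneous)
    (k : ℕ) (hk : 1 ≤ k) (hsf : 2 ≤ k → S.SquareFree)
    (x₁ : G) (hx₁ : S.IsAtom' x₁)
    (Pp X : G) (hPmem : Pp ∈ S.P) (hPinf : S.nfInf Pp = 0)
    (n : ℕ) (hn : 1 ≤ n) (hPlen : (S.nfWord Pp).length = n)
    (hX : X = Pp⁻¹ * x₁ ^ k * Pp)
    (A : Fin n → G)
    (hA : ∀ i : Fin n, A i * S.Δ ^ (i : ℕ) * (S.nfWord Pp).getD (i : ℕ) 1 =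
      S.Δ ^ ((i : ℕ) + 1)) :
    (S.nfInf X = -(n : ℤ) ∧
      S.nfWord X = (List.ofFn A).reverse ++ List.replicate k x₁ ++ S.nfWord Pp) ∨
    (∃ x₂ Q : G, S.IsAtom' x₂ ∧ IsConj x₁ x₂ ∧ Q ∈ S.P ∧ X = Q⁻¹ * x₂ ^ k * Q ∧
      S.norm Q < S.norm Pp ∧ S.ell Q ≤ S.ell Pp) := by
  classical
  set L := S.nfWord Pp with hLdef
  have hfacL : ∀ a ∈ L, S.IsSimple a ∧ a ≠ 1 ∧ a ≠ S.Δ := S.nf_factors Pp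
  have hchL : List.Chain' S.LeftWeighted L := S.nf_chain Pp
  have hPp_prod : Pp = L.prod := by
    have h := S.nf_prod Pp
    rw [hPinf] at h
    simpa using h
  have hLlen : L.length = n := hPlen
  have hLne : L ≠ [] := by
    intro hc; rw [hc] at hLlen; simp at hLlen; omega
  set B₀ : G := L.getD 0 1 with hB0
  have hB0lt : (0:ℕ) < L.length := by omega
  have hB0mem : B₀ ∈ L := by
    rw [hB0, GarsideStructure.listGetD_lt L hB0lt]
    exact List.getElem_mem hB0lt
  obtain ⟨hB0s, hB01, hB0d⟩ := hfacL B₀ hB0mem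
  have hx₁P : x₁ ∈ S.P := hx₁.1
  have hx₁s : S.IsSimple x₁ := S.atom_simple hft hx₁
  have hx₁Δ : x₁ ≠ S.Δ := by
    intro hc
    have hle : S.le B₀ x₁ := by rw [hc]; exact hB0s.2
    rcases S.atom_le_cases hx₁ hB0s.1 hle with h | h
    · exact hB01 h
    · exact hB0d (h.trans hc)
  have hB0Pp : S.le B₀ Pp := by
    cases hL : L with
    | nil => exact absurd hL hLne
    | cons a t =>
      have ha : B₀ = a := by rw [hB0, hL]; rfl
      have htpos : t.prod ∈ S.P :=
        S.prod_pos fun z hz => (hfacL z (by rw [hL]; simp [hz])).1.1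
      rw [hPp_prod, hL, List.prod_cons, ha]
      exact S.le_mul_right htpos
  have hPpDn : S.le Pp (S.Δ ^ n) := by
    have h := S.le_pow_delta L (fun s hs => (hfacL s hs).1)
    rw [hLlen] at h
    rw [hPp_prod]
    exact h
  -- the shortening construction
  have hshort : ∀ y : G, S.IsAtom' y → S.le y Pp → y⁻¹ * x₁ * y ∈ S.P →
      (∃ x₂ Q : G, S.IsAtom' x₂ ∧ IsConj x₁ x₂ ∧ Q ∈ S.P ∧ X = Q⁻¹ * x₂ ^ k * Q ∧
        S.norm Q < S.norm Pp ∧ S.ell Q ≤ S.ell Pp) := by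
    intro y hy hyPp hx2P
    have hQP : y⁻¹ * Pp ∈ S.P := hyPp
    refine ⟨y⁻¹ * x₁ * y, y⁻¹ * Pp, ?_, ?_, hQP, ?_, ?_, ?_⟩
    · apply S.atom_of_norm_one hx2P
      have hnorm := hhom y hy.1 _ hx2P
      have hnorm2 := hhom x₁ hx₁.1 y hy.1
      have heq : y * (y⁻¹ * x₁ * y) = x₁ * y := by group
      rw [heq] at hnorm
      have h1 := S.atom_norm_one hx₁
      have h2 := S.atom_norm_one hy
      omega
    · exact isConj_iff.mpr ⟨y⁻¹, by group⟩
    · rw [hX]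
      have hck : (y⁻¹*x₁*y)^k = y⁻¹ * x₁^k * y := by
        have h := conj_pow (i := k) (a := y⁻¹) (b := x₁)
        simpa using h
      rw [hck]
      group
    · have h := hhom y hy.1 (y⁻¹*Pp) hQP
      have heq : y * (y⁻¹ * Pp) = Pp := by group
      rw [heq] at h
      have h1 := S.atom_norm_one hy
      omega
    · show (S.nfWord (y⁻¹*Pp)).length ≤ (S.nfWord Pp).length
      have hQD : S.le (y⁻¹*Pp) (S.Δ^n) := by
        show (y⁻¹*Pp)⁻¹ * S.Δ^n ∈ S.P
        have heq : (y⁻¹*Pp)⁻¹ * S.Δ^n = (Pp⁻¹ * S.Δ^n) * ((S.Δ^n)⁻¹ * y * S.Δ^n) := by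
          group
        rw [heq]
        exact S.mul_mem hPpDn ((S.tau_pow_simple n (S.atom_simple hft hy)).1)
      have hsup := S.sup_le hft hQP hQD
      have h0 := S.nfInf_nonneg hQP
      have : (S.nfWord Pp).length = n := hPlen
      omega
  by_cases h1 : S.le x₁ B₀
  · refine Or.inr (hshort x₁ hx₁ (S.le_trans' h1 hB0Pp) ?_)
    have heq : x₁⁻¹ * x₁ * x₁ = x₁ := by group
    rw [heq]; exact hx₁P
  by_cases h2 : S.wedge (x₁⁻¹ * S.Δ) B₀ = 1
  case neg =>
    set c := S.wedge (x₁⁻¹ * S.Δ) B₀ with hc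
    have hcP : c ∈ S.P := S.wedge_pos (S.dt_simple hx₁s).1 hB0s.1
    obtain ⟨y, hyatom, hyc⟩ := S.exists_atom_le hcP h2
    have hyB0 : S.le y B₀ := S.le_trans' hyc (S.wedge_le_right' _ _)
    have hyPp : S.le y Pp := S.le_trans' hyB0 hB0Pp
    have hys : S.IsSimple y := S.atom_simple hft hyatom
    have hx1y_s : S.IsSimple (x₁ * y) := by
      refine ⟨S.mul_mem hx₁P hys.1, ?_⟩
      show (x₁*y)⁻¹ * S.Δ ∈ S.P
      have heq : (x₁*y)⁻¹ * S.Δ = y⁻¹ * (x₁⁻¹ * S.Δ) := by group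
      rw [heq]
      exact S.le_trans' hyc (S.wedge_le_left' _ _)
    have hges : S.ges (x₁*y) y := by
      show (x₁*y) * y⁻¹ ∈ S.P
      have heq : (x₁*y) * y⁻¹ = x₁ := by group
      rw [heq]; exact hx₁P
    have hley : S.le y (x₁*y) := (hsym y (x₁*y) hys hx1y_s).mpr hges
    have hx2P : y⁻¹ * x₁ * y ∈ S.P := by
      have h := hley
      show y⁻¹ * x₁ * y ∈ S.P
      have heq : y⁻¹ * x₁ * y = y⁻¹ * (x₁ * y) := by group
      rw [heq]; exact h
    exact Or.inr (hshort y hyatom hyPp hx2P)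
  case pos =>
    left
    -- identification of the A word
    have hAeq : ∀ i : Fin n, A i = S.invA L (i : ℕ) := by
      intro i
      have h := hA i
      have h2 : A i = S.Δ^((i:ℕ)+1) * (L.getD (i:ℕ) 1)⁻¹ * (S.Δ^(i:ℕ))⁻¹ := by
        rw [← h]; group
      rw [h2]
      rfl
    have hofFn : (List.ofFn A).reverse = S.invW L := by
      have h : List.ofFn A = (List.range L.length).map (S.invA L) := by
        apply List.ext_getElem
        · simp [hLlen]
        · intro i hi1 hi2
          simp only [List.getElem_ofFn, List.getElem_map, List.getElem_range]
          exact hAeq _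
      unfold GarsideStructure.invW
      rw [h]
    -- the left-weighted junctions
    have hA0x : S.LeftWeighted (S.Δ * B₀⁻¹) x₁ := by
      rw [S.lw_iff (S.dbar_simple hft hB0s) hx₁P]
      have heq : (S.Δ * B₀⁻¹)⁻¹ * S.Δ = B₀ := by group
      rw [heq]
      rcases S.atom_le_cases hx₁ (S.wedge_pos hB0s.1 hx₁P) (S.wedge_le_right' B₀ x₁) with h | h
      · exact h
      · exfalso; apply h1; rw [← h]; exact S.wedge_le_left' B₀ x₁
    have hxB0 : S.LeftWeighted x₁ B₀ := by
      rw [S.lw_iff hx₁s hB0s.1]; exact h2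
    have hxx : 2 ≤ k → S.LeftWeighted x₁ x₁ := by
      intro hk2
      rw [S.lw_iff hx₁s hx₁P]
      rcases S.atom_le_cases hx₁ (S.wedge_pos (S.dt_simple hx₁s).1 hx₁P)
        (S.wedge_le_right' _ _) with h | h
      · exact h
      · exfalso
        have hxd : S.le x₁ (x₁⁻¹ * S.Δ) := by
          have hw := S.wedge_le_left' (x₁⁻¹ * S.Δ) x₁
          rwa [h] at hw
        have hx2D : (x₁^2)⁻¹ * S.Δ ∈ S.P := by
          have heq : (x₁^2)⁻¹ * S.Δ = x₁⁻¹ * (x₁⁻¹ * S.Δ) := by group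
          rw [heq]; exact hxd
        exact (hsf hk2) S.Δ S.simple_delta ⟨1, x₁, (x₁^2)⁻¹ * S.Δ, S.one_mem, hx₁, hx2D, by group⟩
    -- factors of the candidate word
    set W : List G := (List.ofFn A).reverse ++ List.replicate k x₁ ++ L with hW
    have hfacW : ∀ a ∈ W, S.IsSimple a ∧ a ≠ 1 ∧ a ≠ S.Δ := by
      intro a ha
      rw [hW, List.mem_append, List.mem_append] at ha
      rcases ha with (ha | ha) | ha
      · rw [hofFn] at ha
        exact S.invW_factors hft hfacL a ha
      · rw [List.eq_of_mem_replicate ha]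
        exact ⟨hx₁s, hx₁.2.1, hx₁Δ⟩
      · exact hfacL a ha
    -- chain
    obtain ⟨m, rfl⟩ : ∃ m, n = m + 1 := ⟨n - 1, by omega⟩
    obtain ⟨k', rfl⟩ : ∃ k', k = k' + 1 := ⟨k - 1, by omega⟩
    have hlast_ofFn : (List.ofFn A).reverse.getLast? = some (S.Δ * B₀⁻¹) := by
      rw [hofFn]
      unfold GarsideStructure.invW
      rw [List.getLast?_reverse, hLlen, List.range_succ_eq_map]
      simp only [List.map_cons, List.head?_cons]
      congr 1
      unfold GarsideStructure.invA
      rw [← hB0]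
      simp
    have hhead_rep : (List.replicate (k'+1) x₁).head? = some x₁ := by
      rw [List.replicate_succ]; rfl
    have hlast_rep : (List.replicate (k'+1) x₁).getLast? = some x₁ := by
      rw [List.replicate_succ', List.getLast?_concat]
    have hhead_L : L.head? = some B₀ := by
      cases hL : L with
      | nil => exact absurd hL hLne
      | cons a t =>
        have : B₀ = a := by rw [hB0, hL]; rfl
        rw [this]; rfl
    have hchW : List.Chain' S.LeftWeighted W := by
      rw [hW]
      rw [List.Chain', List.isChain_append]
      refine ⟨?_, hchL, ?_⟩
      · rw [List.isChain_append]
        refine ⟨?_, ?_, ?_⟩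
        · rw [hofFn]
          exact S.invW_chain hft (fun a ha => (hfacL a ha).1) hchL
        · cases Nat.lt_or_ge k' 1 with
          | inl hk => interval_cases k' <;> simp
          | inr hk =>
            exact chain'_replicate_self (hxx (by omega)) _
        · intro x hx y hy
          rw [hlast_ofFn] at hx
          rw [hhead_rep] at hy
          simp only [Option.mem_def, Option.some_inj] at hx hy
          rw [← hx, ← hy]
          exact hA0x
      · intro x hx y hy
        rw [List.getLast?_append_of_ne_nil _ (by simp)] at hx
        rw [hlast_rep] at hx
        rw [hhead_L] at hy
        simp only [Option.mem_def, Option.some_inj] at hx hy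
        rw [← hx, ← hy]
        exact hxB0
    -- the product identity
    have hXeq : X = S.Δ^(-((m+1:ℕ):ℤ)) * W.prod := by
      rw [hW, hX, hPp_prod]
      rw [List.prod_append, List.prod_append, hofFn, S.invW_prod, List.prod_replicate, hLlen]
      rw [← zpow_natCast S.Δ (m+1)]
      group
    have huniq := S.nf_unique X (-((m+1:ℕ):ℤ)) W hfacW hchW hXeq
    exact ⟨huniq.1.symm, huniq.2.symm⟩
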